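/- Under Assumption 1, the iterates of the smoothing accelerated projected gradient method (Algorithm 1) satisfy, for all k ≥ 2, f(x^k) − f(x*) ≤ (2L‖x^0 − x*‖² + 6βμ_0² log k)/(μ_0 k) + 2(L' + L/μ_0)(‖x^0 − x*‖² + (3βμ_0²/L) log k)/k²; in particular f(x^k) − f(x*) = O(k^{-1} log k). -/

import Mathlib

open Filter Topology

local notation "⟪" x ", " y "⟫" => @inner ℝ _ _ x y

lemma aux_line_deriv {E : Type*} [NormedAddCommGroup E] [InnerProductSpace ℝ E]
    [CompleteSpace E] {F : E → ℝ} {p : E} (hd : DifferentiableAt ℝ F p)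
    (v d : E) (t : ℝ) (hp : v + t • d = p) :
    HasDerivAt (fun s : ℝ => F (v + s • d)) ⟪gradient F p, d⟫ t := by
  subst hp
  have h1 : HasDerivAt (fun s : ℝ => v + s • d) d t := by
    simpa using ((hasDerivAt_id t).smul_const d).const_add v
  have h2 := (hd.hasGradientAt.hasFDerivAt).comp_hasDerivAt t h1
  simpa [Function.comp_def, InnerProductSpace.toDual_apply_apply] using h2

lemma aux_grad_convex {E : Type*} [NormedAddCommGroup E] [InnerProductSpace ℝ E]
    [CompleteSpace E] {s : Set E} {F : E → ℝ} (hF : ConvexOn ℝ s F)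
    {v w : E} (hv : v ∈ s) (hw : w ∈ s) (hd : DifferentiableAt ℝ F v) :
    F v + ⟪gradient F v, w - v⟫ ≤ F w := by
  set d := w - v with hdd
  have hφ : HasDerivAt (fun t : ℝ => F (v + t • d)) ⟪gradient F v, d⟫ 0 :=
    aux_line_deriv hd v d 0 (by simp)
  have hslope := hasDerivAt_iff_tendsto_slope.1 hφ
  have hsub : 𝓝[>] (0:ℝ) ≤ 𝓝[≠] (0:ℝ) :=
    nhdsWithin_mono 0 (fun t ht => ne_of_gt ht)
  have key : ⟪gradient F v, d⟫ ≤ F w - F v := by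
    refine le_of_tendsto (hslope.mono_left hsub) ?_
    filter_upwards [Ioo_mem_nhdsGT_of_mem (by norm_num : (0:ℝ) ∈ Set.Ico (0:ℝ) 1)]
      with t ht
    have ht0 : 0 < t := ht.1
    have ht1 : t < 1 := ht.2
    have hcomb : v + t • d = (1 - t) • v + t • w := by
      rw [hdd]; module
    have hconvineq : F (v + t • d) ≤ (1 - t) * F v + t * F w := by
      rw [hcomb]
      exact hF.2 hv hw (by linarith) (by linarith) (by ring)
    have hsl : slope (fun t : ℝ => F (v + t • d)) 0 t
        = (F (v + t • d) - F (v + (0:ℝ) • d)) / t := by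
      rw [slope_def_field]; ring_nf
    rw [hsl]
    have h0 : v + (0:ℝ) • d = v := by simp
    rw [h0, div_le_iff₀ ht0]
    nlinarith [hconvineq]
  linarith

lemma aux_descent {E : Type*} [NormedAddCommGroup E] [InnerProductSpace ℝ E]
    [CompleteSpace E] {s : Set E} (hs : Convex ℝ s) {F : E → ℝ} {C : NNReal}
    (hlip : LipschitzOnWith C (gradient F) s)
    (hdiff : ∀ u ∈ s, DifferentiableAt ℝ F u)
    {v w : E} (hv : v ∈ s) (hw : w ∈ s) :
    F w ≤ F v + ⟪gradient F v, w - v⟫ + (C : ℝ) / 2 * ‖w - v‖ ^ 2 := by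
  set d := w - v with hdd
  set g := gradient F v with hg
  set ψ : ℝ → ℝ := fun t => F (v + t • d) - t * ⟪g, d⟫ - (C : ℝ) * t ^ 2 / 2 * ‖d‖ ^ 2
    with hψ
  have hmem : ∀ t ∈ Set.Icc (0:ℝ) 1, v + t • d ∈ s := by
    intro t ht
    have h : v + t • d = (1 - t) • v + t • w := by rw [hdd]; module
    rw [h]
    exact hs hv hw (by linarith [ht.1, ht.2]) ht.1 (by ring)
  have hder : ∀ t ∈ Set.Icc (0:ℝ) 1,
      HasDerivAt ψ (⟪gradient F (v + t • d), d⟫ - ⟪g, d⟫ - (C:ℝ) * t * ‖d‖ ^ 2) t := by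
    intro t ht
    have h1 : HasDerivAt (fun s : ℝ => F (v + s • d)) ⟪gradient F (v + t • d), d⟫ t :=
      aux_line_deriv (hdiff _ (hmem t ht)) v d t rfl
    have h2 : HasDerivAt (fun t : ℝ => t * ⟪g, d⟫) ⟪g, d⟫ t := by
      simpa using (hasDerivAt_id t).mul_const ⟪g, d⟫
    have h3 : HasDerivAt (fun t : ℝ => (C : ℝ) * t ^ 2 / 2 * ‖d‖ ^ 2)
        ((C:ℝ) * t * ‖d‖ ^ 2) t := by
      have h4 := (((hasDerivAt_pow 2 t).const_mul (C:ℝ)).div_const 2).mul_const (‖d‖ ^ 2)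
      refine h4.congr_deriv ?_
      push_cast
      ring
    exact (h1.sub h2).sub h3
  have hanti : AntitoneOn ψ (Set.Icc (0:ℝ) 1) := by
    apply antitoneOn_of_deriv_nonpos (convex_Icc 0 1)
    · intro t ht
      exact (hder t ht).continuousAt.continuousWithinAt
    · intro t ht
      rw [interior_Icc] at ht
      exact ((hder t (Set.mem_Icc_of_Ioo ht)).differentiableAt).differentiableWithinAt
    · intro t ht
      rw [interior_Icc] at ht
      rw [(hder t (Set.mem_Icc_of_Ioo ht)).deriv]
      have hdist : ‖gradient F (v + t • d) - g‖ ≤ (C : ℝ) * (t * ‖d‖) := by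
        have hh := hlip.dist_le_mul (v + t • d) (hmem t (Set.mem_Icc_of_Ioo ht)) v hv
        rw [dist_eq_norm, dist_eq_norm] at hh
        calc ‖gradient F (v + t • d) - g‖ ≤ (C:ℝ) * ‖v + t • d - v‖ := hh
        _ = (C:ℝ) * (t * ‖d‖) := by
            rw [add_sub_cancel_left, norm_smul, Real.norm_eq_abs, abs_of_pos ht.1]
      have h1 : ⟪gradient F (v + t • d) - g, d⟫
          ≤ ‖gradient F (v + t • d) - g‖ * ‖d‖ := real_inner_le_norm _ _
      rw [inner_sub_left] at h1
      nlinarith [norm_nonneg d, mul_le_mul_of_nonneg_right hdist (norm_nonneg d)]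
  have hfin := hanti (Set.left_mem_Icc.2 (by norm_num)) (Set.right_mem_Icc.2 (by norm_num))
    (by norm_num)
  have hw1 : v + (1:ℝ) • d = w := by rw [hdd]; module
  have hv0 : v + (0:ℝ) • d = v := by simp
  simp only [hψ, hw1, hv0] at hfin
  -- hfin : F w - 1*⟪g,d⟫ - C*1^2/2*‖d‖^2 ≤ F v - 0 - 0
  nlinarith [hfin]

lemma aux_proj {E : Type*} [NormedAddCommGroup E] [InnerProductSpace ℝ E]
    {s : Set E} (hs : Convex ℝ s) (hne : s.Nonempty) {u p : E} (hp : p ∈ s)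
    (hmin : ∀ w ∈ s, ‖p - u‖ ≤ ‖w - u‖) : ∀ w ∈ s, ⟪u - p, w - p⟫ ≤ 0 := by
  haveI : Nonempty s := hne.to_subtype
  have heq : ‖u - p‖ = ⨅ w : s, ‖u - (w:E)‖ := by
    apply le_antisymm
    · apply le_ciInf
      intro w
      rw [norm_sub_rev, norm_sub_rev u (w:E)]
      exact hmin w w.2
    · refine ciInf_le ⟨0, ?_⟩ (⟨p, hp⟩ : s)
      rintro r ⟨w, rfl⟩
      exact norm_nonneg _
  exact (norm_eq_iInf_iff_real_inner_le_zero hs hp).1 heq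

set_option maxHeartbeats 2000000 in
theorem stmt_17 (m : ℕ) (S : Set (EuclideanSpace ℝ (Fin m)))
    (hS : S.Nonempty) (hSc : IsClosed S) (hScv : Convex ℝ S)
    (f : ℝ → EuclideanSpace ℝ (Fin m) → ℝ)
    (β μ0 L L' : ℝ) (hβ : 0 < β) (hμ0 : 0 < μ0) (hL : 0 < L) (hL' : 0 ≤ L')
    -- Assumption 1: convexity, differentiability, Lipschitz gradient, sandwich
    (hconv : ∀ μ : ℝ, 0 < μ → ConvexOn ℝ S (f μ))
    (hdiff : ∀ μ : ℝ, 0 < μ → ∀ w ∈ S, DifferentiableAt ℝ (f μ) w)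
    (hlip : ∀ μ : ℝ, 0 < μ →
      LipschitzOnWith (Real.toNNReal (L' + L / μ)) (gradient (f μ)) S)
    (hsandwich : ∀ w ∈ S, ∀ μ₁ μ₂ : ℝ, 0 ≤ μ₂ → μ₂ ≤ μ₁ →
      0 ≤ f μ₂ w - f μ₁ w ∧ f μ₂ w - f μ₁ w ≤ β * (μ₁ - μ₂))
    (xstar : EuclideanSpace ℝ (Fin m)) (hxstarS : xstar ∈ S)
    (hmin : ∀ w ∈ S, f 0 xstar ≤ f 0 w)
    -- Algorithm 1 (S-APG)
    (μ : ℕ → ℝ) (hμ : ∀ k : ℕ, μ k = μ0 / (k + 1))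
    (Lk : ℕ → ℝ) (hLk : ∀ k : ℕ, Lk k = L' + L / μ k)
    (a : ℕ → ℝ) (ha0 : a 0 = 0)
    (harec : ∀ k : ℕ, a (k + 1) = (1 + Real.sqrt (4 * (a k) ^ 2 + 1)) / 2)
    (x y z : ℕ → EuclideanSpace ℝ (Fin m))
    (hx0 : x 0 = z 0) (hx0S : x 0 ∈ S)
    (hy : ∀ k : ℕ, y k = (1 - 1 / a (k + 1)) • x k + (1 / a (k + 1)) • z k)
    (hzS : ∀ k : ℕ, z (k + 1) ∈ S)
    (hproj : ∀ k : ℕ, ∀ w ∈ S,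
      ‖z (k + 1) - (z k - (a (k + 1) / Lk k) • gradient (f (μ k)) (y k))‖ ≤
        ‖w - (z k - (a (k + 1) / Lk k) • gradient (f (μ k)) (y k))‖)
    (hxrec : ∀ k : ℕ, x (k + 1) = (1 - 1 / a (k + 1)) • x k + (1 / a (k + 1)) • z (k + 1))
    :
    ∀ k : ℕ, 2 ≤ k →
      f 0 (x k) - f 0 xstar ≤
        (2 * L * ‖x 0 - xstar‖ ^ 2 + 6 * β * μ0 ^ 2 * Real.log k) / (μ0 * k)
        + 2 * (L' + L / μ0) * (‖x 0 - xstar‖ ^ 2 + (3 * β * μ0 ^ 2 / L) * Real.log k) / k ^ 2 := by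
  -- basic facts about μ and Lk
  have hμpos : ∀ k : ℕ, 0 < μ k := by
    intro k; rw [hμ]; positivity
  have hμval : ∀ k : ℕ, μ k = μ0 / (k + 1) := hμ
  have hμmono : ∀ k : ℕ, μ (k + 1) ≤ μ k := by
    intro k; rw [hμ, hμ]; push_cast
    apply div_le_div_of_nonneg_left (le_of_lt hμ0) (by positivity) (by linarith)
  have hLpos : ∀ k : ℕ, 0 < Lk k := by
    intro k
    have h1 : 0 < L / μ k := div_pos hL (hμpos k)
    rw [hLk]; linarith
  have hLlb : ∀ k : ℕ, L * (k + 1) / μ0 ≤ Lk k := by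
    intro k
    have h1 : L / μ k = L * (k + 1) / μ0 := by
      rw [hμ]; field_simp
    rw [hLk, h1]; linarith
  have hLstep : ∀ k : ℕ, Lk (k + 1) = Lk k + L / μ0 := by
    intro k
    rw [hLk, hLk, hμ, hμ]
    have h0 : (0:ℝ) < (k:ℝ) + 1 := by positivity
    have h1 : (0:ℝ) < (k:ℝ) + 2 := by positivity
    push_cast
    field_simp
    ring
  -- facts about a
  have hsqrt : ∀ k : ℕ, Real.sqrt (4 * (a k) ^ 2 + 1) ^ 2 = 4 * (a k) ^ 2 + 1 :=
    fun k => Real.sq_sqrt (by positivity)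
  have ha1le : ∀ k : ℕ, 1 ≤ a (k + 1) := by
    intro k
    rw [harec]
    have h1 : (1:ℝ) ≤ Real.sqrt (4 * (a k) ^ 2 + 1) :=
      (Real.le_sqrt (by norm_num) (by positivity)).2 (by nlinarith [sq_nonneg (a k)])
    linarith
  have hannonneg : ∀ k : ℕ, 0 ≤ a k := by
    intro k
    cases k with
    | zero => rw [ha0]
    | succ n => linarith [ha1le n]
  have hasq : ∀ k : ℕ, a (k + 1) ^ 2 - a (k + 1) = (a k) ^ 2 := by
    intro k
    rw [harec]
    have h1 := hsqrt k
    have h2 := Real.sqrt_nonneg (4 * (a k) ^ 2 + 1)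
    nlinarith
  have halow : ∀ k : ℕ, ((k:ℝ) + 2) / 2 ≤ a (k + 1) := by
    intro k
    induction k with
    | zero =>
      rw [harec, ha0]
      norm_num
    | succ n ih =>
      rw [harec]
      have h1 : 2 * a (n + 1) ≤ Real.sqrt (4 * (a (n + 1)) ^ 2 + 1) := by
        rw [show 4 * (a (n+1))^2 + 1 = (2 * a (n+1))^2 + 1 by ring]
        calc 2 * a (n + 1) = Real.sqrt ((2 * a (n+1))^2) := by
              rw [Real.sqrt_sq (by linarith [ha1le n])]
        _ ≤ Real.sqrt ((2 * a (n+1))^2 + 1) := Real.sqrt_le_sqrt (by linarith)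
      push_cast
      push_cast at ih
      linarith
  have haub : ∀ k : ℕ, a (k + 1) ≤ (3 * (k:ℝ) + 4) / 4 := by
    intro k
    induction k with
    | zero =>
      rw [harec, ha0]
      norm_num
    | succ n ih =>
      rw [harec]
      have hA1 : 1 ≤ a (n + 1) := ha1le n
      have h1 : Real.sqrt (4 * (a (n + 1)) ^ 2 + 1) ≤ 2 * a (n + 1) + 1 / 4 := by
        calc Real.sqrt (4 * (a (n + 1)) ^ 2 + 1)
            ≤ Real.sqrt ((2 * a (n + 1) + 1 / 4) ^ 2) := by
              apply Real.sqrt_le_sqrt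
              nlinarith
        _ = 2 * a (n + 1) + 1 / 4 := Real.sqrt_sq (by linarith)
      push_cast
      push_cast at ih
      linarith
  -- memberships
  have hzmem : ∀ k : ℕ, z k ∈ S := by
    intro k
    cases k with
    | zero => rw [← hx0]; exact hx0S
    | succ n => exact hzS n
  have hcomb : ∀ (u v : EuclideanSpace ℝ (Fin m)) (k : ℕ), u ∈ S → v ∈ S →
      (1 - 1 / a (k + 1)) • u + (1 / a (k + 1)) • v ∈ S := by
    intro u v k hu hv
    have h1 : 1 ≤ a (k + 1) := ha1le k
    have h2 : 0 < a (k + 1) := by linarith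
    have h3 : 1 / a (k + 1) ≤ 1 := by
      rw [div_le_one h2]; linarith
    exact hScv hu hv (by linarith) (by positivity) (by ring)
  have hxmem : ∀ k : ℕ, x k ∈ S := by
    intro k
    induction k with
    | zero => exact hx0S
    | succ n ih =>
      rw [hxrec]
      exact hcomb _ _ n ih (hzS n)
  have hymem : ∀ k : ℕ, y k ∈ S := by
    intro k
    rw [hy]
    exact hcomb _ _ k (hxmem k) (hzmem k)

  -- the one-step inequality of accelerated projected gradient
  have Ek : ∀ k : ℕ,
      a (k+1)^2 * (f (μ k) (x (k+1)) - f (μ k) xstar) + Lk k / 2 * ‖z (k+1) - xstar‖^2 ≤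
      (a k)^2 * (f (μ k) (x k) - f (μ k) xstar) + Lk k / 2 * ‖z k - xstar‖^2 := by
    intro k
    have hμk := hμpos k
    have hA1 : 1 ≤ a (k+1) := ha1le k
    have hApos : 0 < a (k+1) := by linarith
    have hAne : a (k+1) ≠ 0 := ne_of_gt hApos
    have hLKpos : 0 < Lk k := hLpos k
    have hLKne : Lk k ≠ 0 := ne_of_gt hLKpos
    set A := a (k+1) with hAdef
    set g := gradient (f (μ k)) (y k) with hgdef
    -- descent lemma
    have hCoe : ((Real.toNNReal (L' + L / μ k) : NNReal) : ℝ) = Lk k := by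
      rw [Real.coe_toNNReal _ (by rw [← hLk]; exact le_of_lt hLKpos), hLk]
    have hdes : f (μ k) (x (k+1)) ≤ f (μ k) (y k) + ⟪g, x (k+1) - y k⟫
        + Lk k / 2 * ‖x (k+1) - y k‖^2 := by
      have := aux_descent hScv (hlip (μ k) hμk) (hdiff (μ k) hμk)
        (hymem k) (hxmem (k+1))
      rwa [hCoe] at this
    -- convexity inequalities
    have hconv1 : f (μ k) (y k) + ⟪g, xstar - y k⟫ ≤ f (μ k) xstar :=
      aux_grad_convex (hconv (μ k) hμk) (hymem k) hxstarS (hdiff (μ k) hμk _ (hymem k))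
    have hconv2 : f (μ k) (y k) + ⟪g, x k - y k⟫ ≤ f (μ k) (x k) :=
      aux_grad_convex (hconv (μ k) hμk) (hymem k) (hxmem k) (hdiff (μ k) hμk _ (hymem k))
    -- projection variational inequality at xstar
    have hvi : ⟪(z k - (A / Lk k) • g) - z (k+1), xstar - z (k+1)⟫ ≤ 0 :=
      aux_proj hScv hS (hzS k) (fun w hw => hproj k w hw) xstar hxstarS
    -- vector identities
    have hv0 : A • (x (k+1) - y k) = z (k+1) - z k := by
      rw [hxrec, hy, ← hAdef]
      match_scalars <;> field_simp <;> ring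
    have hv1 : A • (x (k+1) - y k) =
        (z (k+1) - xstar) + ((xstar - y k) + (A - 1) • (x k - y k)) := by
      rw [hxrec, hy, ← hAdef]
      match_scalars <;> field_simp <;> ring
    -- scalar abbreviations
    set G1 := ⟪g, xstar - y k⟫ with hG1
    set G2 := ⟪g, x k - y k⟫ with hG2
    set G3 := ⟪g, xstar - z (k+1)⟫ with hG3
    set T := ⟪g, x (k+1) - y k⟫ with hT
    set N := ‖x (k+1) - y k‖^2 with hN
    set N1 := ‖z (k+1) - z k‖^2 with hN1
    set Rn := ‖z (k+1) - xstar‖^2 with hRn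
    set Rk := ‖z k - xstar‖^2 with hRk
    -- I1 : A * T = -G3 + G1 + (A-1) * G2
    have I1 : A * T = -G3 + G1 + (A - 1) * G2 := by
      have h1 : ⟪g, A • (x (k+1) - y k)⟫ = A * T := real_inner_smul_right g _ A
      rw [hv1] at h1
      rw [inner_add_right, inner_add_right, real_inner_smul_right] at h1
      have h2 : ⟪g, z (k+1) - xstar⟫ = -G3 := by
        rw [hG3, ← inner_neg_right, neg_sub]
      rw [h2] at h1
      linarith
    -- I2 : A^2 * N = N1
    have I2 : A^2 * N = N1 := by
      have h1 : ‖A • (x (k+1) - y k)‖^2 = A^2 * N := by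
        rw [norm_smul, Real.norm_eq_abs, abs_of_pos hApos, mul_pow]
      rw [hv0] at h1
      rw [← h1]
    -- projection inequality in scalar form
    have P2 : ⟪z k - z (k+1), xstar - z (k+1)⟫ = (N1 + Rn - Rk) / 2 := by
      have h1 := norm_sub_sq_real (z k - z (k+1)) (xstar - z (k+1))
      have h2 : (z k - z (k+1)) - (xstar - z (k+1)) = z k - xstar := by abel
      rw [h2] at h1
      have h3 : ‖z k - z (k+1)‖^2 = N1 := by rw [hN1, norm_sub_rev]
      have h4 : ‖xstar - z (k+1)‖^2 = Rn := by rw [hRn, norm_sub_rev]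
      rw [h3, h4] at h1
      linarith
    have P1 : ⟪z k - z (k+1), xstar - z (k+1)⟫ ≤ (A / Lk k) * G3 := by
      have h1 : (z k - (A / Lk k) • g) - z (k+1) = (z k - z (k+1)) - (A / Lk k) • g := by
        abel
      rw [h1, inner_sub_left, real_inner_smul_left] at hvi
      rw [hG3]
      linarith
    have M4 : Lk k / 2 * (N1 + Rn - Rk) ≤ A * G3 := by
      have h1 := mul_le_mul_of_nonneg_left (P2 ▸ P1) (le_of_lt hLKpos)
      have h2 : Lk k * ((A / Lk k) * G3) = A * G3 := by
        field_simp
      rw [h2] at h1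
      linarith
    -- multiplied inequalities
    have M1 : A^2 * (f (μ k) (x (k+1))) ≤ A^2 * (f (μ k) (y k)) + A * (-G3 + G1 + (A-1)*G2)
        + Lk k / 2 * N1 := by
      have h1 := mul_le_mul_of_nonneg_left hdes (by positivity : (0:ℝ) ≤ A^2)
      have h2 : A^2 * T = A * (A * T) := by ring
      have h3 : A^2 * (Lk k / 2 * N) = Lk k / 2 * (A^2 * N) := by ring
      rw [mul_add, mul_add, h2, I1, h3, I2] at h1
      linarith
    have M2 : A * (f (μ k) (y k)) + A * G1 ≤ A * (f (μ k) xstar) := by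
      have h1 := mul_le_mul_of_nonneg_left hconv1 (le_of_lt hApos)
      rw [mul_add] at h1
      linarith
    have M3 : (A^2 - A) * (f (μ k) (y k)) + (A^2 - A) * G2 ≤ (A^2 - A) * (f (μ k) (x k)) := by
      have hnn : (0:ℝ) ≤ A^2 - A := by
        rw [show A^2 - A = A * (A - 1) from by ring]
        exact mul_nonneg (by linarith) (by linarith)
      have h1 := mul_le_mul_of_nonneg_left hconv2 hnn
      rw [mul_add] at h1
      linarith
    -- assemble
    rw [← hasq k]
    linarith [M1, M2, M3, M4]

  -- the potential sequence W and its properties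
  set W : ℕ → ℝ := fun n => if n ≤ 1 then (0:ℝ) else Real.log n - 1/6 with hWdef
  have hW1 : W 1 = 0 := by simp [hWdef]
  have hWval : ∀ n : ℕ, 2 ≤ n → W n = Real.log n - 1/6 := by
    intro n hn
    simp only [hWdef]
    rw [if_neg (by omega)]
  have hlog2 : (2:ℝ)/3 ≤ Real.log 2 := by
    have := Real.log_two_gt_d9
    linarith
  have hWnonneg : ∀ n : ℕ, 0 ≤ W n := by
    intro n
    by_cases hn : n ≤ 1
    · simp [hWdef, hn]
    · rw [hWval n (by omega)]
      have h2 : (2:ℝ) ≤ (n:ℝ) := by exact_mod_cast (by omega : 2 ≤ n)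
      have := Real.log_le_log (by norm_num) h2
      linarith
  set R2 := ‖x 0 - xstar‖^2 with hR2def
  set c := 3 * β * μ0 ^ 2 / L with hcdef
  have hcpos : 0 < c := by rw [hcdef]; positivity
  have hR2nn : 0 ≤ R2 := by rw [hR2def]; positivity
  -- key step bound
  have hWkey : ∀ n : ℕ,
      a (n+1)^2 * (β*μ0) * (2*((n:ℝ)+1)+1) / (((n:ℝ)+1)^2*(((n:ℝ)+1)+1)) ≤
        Lk (n+1) / 2 * c * (W (n+2) - W (n+1)) := by
    intro n
    set K : ℝ := (n:ℝ) + 1 with hKdef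
    have hK1 : (1:ℝ) ≤ K := by rw [hKdef]; have : (0:ℝ) ≤ (n:ℝ) := Nat.cast_nonneg n; linarith
    have hKpos : 0 < K := by linarith
    have ha0' : 0 ≤ a (n+1) := hannonneg (n+1)
    have haK : a (n+1) ≤ (3*K+1)/4 := by
      have := haub n
      rw [hKdef]; linarith
    clear_value K
    have hδ : 2 * (a (n+1))^2 * (2*K+1) / (3*K^2*(K+1)^2) ≤ W (n+2) - W (n+1) := by
      rcases Nat.eq_zero_or_pos n with hn0 | hn1
      · subst hn0
        have ha1 : a 1 = 1 := by
          rw [harec, ha0]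
          norm_num
        rw [ha1, hW1, hWval 2 (by norm_num)]
        have : K = 1 := by rw [hKdef]; norm_num
        rw [this]
        norm_num
        linarith [hlog2]
      · have hn2 : 2 ≤ n + 1 := by omega
        rw [hWval (n+2) (by omega), hWval (n+1) hn2]
        have hcast1 : ((n+2:ℕ):ℝ) = K + 1 := by rw [hKdef]; push_cast; ring
        have hcast2 : ((n+1:ℕ):ℝ) = K := by rw [hKdef]; push_cast; ring
        rw [hcast1, hcast2]
        have hlog : 1/(K+1) ≤ Real.log (K+1) - Real.log K := by
          have h1 := Real.log_le_sub_one_of_pos (show (0:ℝ) < K/(K+1) by positivity)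
          rw [Real.log_div (ne_of_gt hKpos) (by linarith)] at h1
          have h2 : K/(K+1) - 1 = -(1/(K+1)) := by field_simp; ring
          rw [h2] at h1
          linarith
        have hpoly : 2 * (a (n+1))^2 * (2*K+1) / (3*K^2*(K+1)^2) ≤ 1/(K+1) := by
          rw [div_le_div_iff₀ (by positivity) (by positivity)]
          have haK2 : a (n+1)^2 ≤ ((3*K+1)/4)^2 := by nlinarith [haK, ha0']
          have h5 : (0:ℝ) ≤ 2*(2*K+1)*(K+1) := by nlinarith [hK1]
          have h6 := mul_le_mul_of_nonneg_right haK2 h5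
          have h7 : (0:ℝ) ≤ (K-1)*(6*K^2+9*K+1) :=
            mul_nonneg (by linarith) (by nlinarith [hK1])
          nlinarith [h6, mul_nonneg (show (0:ℝ) ≤ K+1 by linarith) h7]
        linarith
    have hWdiff : 0 ≤ W (n+2) - W (n+1) := by
      have h0 : 0 ≤ 2 * (a (n+1))^2 * (2*K+1) / (3*K^2*(K+1)^2) := by positivity
      linarith
    have hLlbn : L * (K+1) / μ0 ≤ Lk (n+1) := by
      have := hLlb (n+1)
      rw [hKdef]; push_cast at this ⊢; linarith
    calc a (n+1)^2 * (β*μ0) * (2*K+1) / (K^2*(K+1))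
        = (L*(K+1)/μ0) / 2 * c * (2 * (a (n+1))^2 * (2*K+1) / (3*K^2*(K+1)^2)) := by
          rw [hcdef]
          field_simp
      _ ≤ (L*(K+1)/μ0) / 2 * c * (W (n+2) - W (n+1)) := by
          apply mul_le_mul_of_nonneg_left hδ
          positivity
      _ ≤ Lk (n+1) / 2 * c * (W (n+2) - W (n+1)) := by
          apply mul_le_mul_of_nonneg_right _ hWdiff
          apply mul_le_mul_of_nonneg_right _ (le_of_lt hcpos)
          linarith
  clear_value W R2 c
  -- the Lyapunov invariant
  have hInv : ∀ k : ℕ,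
      a (k+1)^2 * (f (μ k) (x (k+1)) - f (μ k) xstar) + Lk k / 2 * ‖z (k+1) - xstar‖^2 ≤
        Lk k / 2 * (R2 + c * W (k+1)) := by
    intro k
    induction k with
    | zero =>
      have h := Ek 0
      rw [ha0] at h
      have hz0 : ‖z 0 - xstar‖^2 = R2 := by rw [hR2def, hx0]
      rw [hz0] at h
      rw [hW1]
      have : Lk 0 / 2 * (R2 + c * 0) = Lk 0 / 2 * R2 := by ring
      rw [this]
      linarith [h]
    | succ n ih =>
      set K : ℝ := (n:ℝ) + 1 with hKdef
      have hKpos : (0:ℝ) < K := by rw [hKdef]; positivity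
      have hE := Ek (n+1)
      set D' := f (μ (n+1)) (x (n+2)) - f (μ (n+1)) xstar with hD'
      set Dn := f (μ n) (x (n+1)) - f (μ n) xstar with hDn
      set Cn := f (μ (n+1)) (x (n+1)) - f (μ (n+1)) xstar with hCn
      clear_value K D' Dn Cn
      -- sandwich bounds
      have hsand1 : f (μ (n+1)) (x (n+1)) - f (μ n) (x (n+1)) ≤ β * (μ n - μ (n+1)) := by
        have h := (hsandwich (x (n+1)) (hxmem (n+1)) (μ n) (μ (n+1))
          (le_of_lt (hμpos (n+1))) (hμmono n)).2
        linarith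
      have hsand2 : 0 ≤ f (μ (n+1)) xstar - f (μ n) xstar :=
        (hsandwich xstar hxstarS (μ n) (μ (n+1)) (le_of_lt (hμpos (n+1))) (hμmono n)).1
      have hCD : Cn ≤ Dn + β * (μ n - μ (n+1)) := by
        rw [hCn, hDn]; linarith
      -- lower bound on Dn
      have hDlb : -(β * μ n) ≤ Dn := by
        have h1 := (hsandwich (x (n+1)) (hxmem (n+1)) (μ n) 0 le_rfl (le_of_lt (hμpos n))).2
        have h2 := (hsandwich xstar hxstarS (μ n) 0 le_rfl (le_of_lt (hμpos n))).1
        have h3 := hmin (x (n+1)) (hxmem (n+1))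
        rw [hDn]
        linarith
      -- bound on the distance term
      have hup : Lk n / 2 * ‖z (n+1) - xstar‖^2 ≤
          Lk n / 2 * (R2 + c * W (n+1)) + a (n+1)^2 * (β * μ n) := by
        have h1 := mul_le_mul_of_nonneg_left hDlb (sq_nonneg (a (n+1)))
        linarith [ih, h1]
      have hLn := hLpos n
      have hr2 : L/(2*μ0) * ‖z (n+1) - xstar‖^2 ≤
          L/(2*μ0) * (R2 + c * W (n+1)) + (L/μ0) * (a (n+1)^2 * (β * μ n)) / Lk n := by
        have hq : (0:ℝ) ≤ (L/μ0) / Lk n := div_nonneg (by positivity) (le_of_lt hLn)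
        calc L/(2*μ0) * ‖z (n+1) - xstar‖^2
            = ((L/μ0) / Lk n) * (Lk n / 2 * ‖z (n+1) - xstar‖^2) := by
              field_simp
          _ ≤ ((L/μ0) / Lk n) * (Lk n / 2 * (R2 + c * W (n+1)) + a (n+1)^2 * (β * μ n)) :=
              mul_le_mul_of_nonneg_left hup hq
          _ = L/(2*μ0) * (R2 + c * W (n+1)) + (L/μ0) * (a (n+1)^2 * (β * μ n)) / Lk n := by
              field_simp
      -- bound the extra error terms
      have hμn : μ n = μ0 / K := by rw [hμ, hKdef]
      have hμn1 : μ (n+1) = μ0 / (K+1) := by rw [hμ, hKdef]; push_cast; ring_nf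
      have hEsum : a (n+1)^2 * (β * (μ n - μ (n+1))) + (L/μ0) * (a (n+1)^2 * (β * μ n)) / Lk n ≤
          a (n+1)^2 * (β*μ0) * (2*K+1) / (K^2*(K+1)) := by
        have hterm2 : (L/μ0) * (a (n+1)^2 * (β * μ n)) / Lk n ≤
            a (n+1)^2 * β * μ0 / K^2 := by
          have hnum : (0:ℝ) ≤ (L/μ0) * (a (n+1)^2 * (β * μ n)) := by
            have := le_of_lt (hμpos n)
            positivity
          have hden : L * K / μ0 ≤ Lk n := by
            have := hLlb n
            rw [hKdef]; push_cast at this ⊢; linarith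
          have hdenpos : (0:ℝ) < L * K / μ0 := by positivity
          calc (L/μ0) * (a (n+1)^2 * (β * μ n)) / Lk n
              ≤ (L/μ0) * (a (n+1)^2 * (β * μ n)) / (L * K / μ0) :=
                div_le_div_of_nonneg_left hnum hdenpos hden
            _ = a (n+1)^2 * β * μ0 / K^2 := by
                rw [hμn]
                field_simp
        have hΔ : μ n - μ (n+1) = μ0 / (K * (K+1)) := by
          rw [hμn, hμn1]
          field_simp
          ring
        rw [hΔ]
        have hident : a (n+1)^2 * (β * (μ0 / (K * (K+1)))) + a (n+1)^2 * β * μ0 / K^2 =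
            a (n+1)^2 * (β*μ0) * (2*K+1) / (K^2*(K+1)) := by
          field_simp
          ring
        linarith
      -- assemble the induction step
      have hkey := hWkey n
      rw [← hKdef] at hkey
      have hLs := hLstep n
      have hfinal : Lk (n+1) / 2 * (R2 + c * W (n+1)) + Lk (n+1) / 2 * c * (W (n+2) - W (n+1)) =
          Lk (n+1) / 2 * (R2 + c * W (n+2)) := by ring
      have hrw : a (n+1)^2 * Cn + Lk (n+1) / 2 * ‖z (n+1) - xstar‖^2 ≤
          Lk (n+1) / 2 * (R2 + c * W (n+2)) := by
        have e1 : Lk (n+1) / 2 * ‖z (n+1) - xstar‖^2 =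
            Lk n / 2 * ‖z (n+1) - xstar‖^2 + L/(2*μ0) * ‖z (n+1) - xstar‖^2 := by
          rw [hLs]; ring
        have e2 : a (n+1)^2 * Cn ≤ a (n+1)^2 * Dn + a (n+1)^2 * (β * (μ n - μ (n+1))) := by
          have := mul_le_mul_of_nonneg_left hCD (sq_nonneg (a (n+1)))
          linarith [this]
        have e3 : Lk (n+1) / 2 * (R2 + c * W (n+1)) =
            Lk n / 2 * (R2 + c * W (n+1)) + L/(2*μ0) * (R2 + c * W (n+1)) := by
          rw [hLs]; ring
        linarith [ih, hr2, hEsum, hkey]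
      calc a (n+2)^2 * D' + Lk (n+1) / 2 * ‖z (n+2) - xstar‖^2
          ≤ a (n+1)^2 * Cn + Lk (n+1) / 2 * ‖z (n+1) - xstar‖^2 := hE
        _ ≤ Lk (n+1) / 2 * (R2 + c * W (n+2)) := hrw

  -- final bound
  intro k hk
  obtain ⟨j, rfl⟩ : ∃ j : ℕ, k = j + 2 := ⟨k - 2, by omega⟩
  have e2 : j + 1 + 1 = j + 2 := rfl
  set K : ℝ := (j:ℝ) + 2 with hKdef
  have hK2 : (2:ℝ) ≤ K := by
    rw [hKdef]
    have : (0:ℝ) ≤ (j:ℝ) := Nat.cast_nonneg j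
    linarith
  clear_value K
  have hKpos : (0:ℝ) < K := by linarith
  have hcast : ((j+2:ℕ):ℝ) = K := by rw [hKdef]; push_cast; ring
  rw [hcast]
  have hlogK : (2:ℝ)/3 ≤ Real.log K := by
    have := Real.log_le_log (by norm_num : (0:ℝ) < 2) hK2
    linarith
  have hI := hInv (j+1)
  rw [e2] at hI
  set D := f (μ (j+1)) (x (j+2)) - f (μ (j+1)) xstar with hDdef
  clear_value D
  have hW2 : W (j+2) = Real.log K - 1/6 := by
    rw [hWval (j+2) (by omega), hcast]
  rw [hW2] at hI
  set Aq := R2 + c * (Real.log K - 1/6) with hAq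
  clear_value Aq
  have hAqnn : 0 ≤ Aq := by
    have h1 : 0 ≤ c * (Real.log K - 1/6) := mul_nonneg (le_of_lt hcpos) (by linarith)
    rw [hAq]; linarith
  have hAqle : Aq ≤ R2 + c * Real.log K := by
    rw [hAq]
    nlinarith [hcpos]
  have hRclg : 0 ≤ R2 + c * Real.log K := by
    have h1 : 0 ≤ c * Real.log K := mul_nonneg (le_of_lt hcpos) (by linarith)
    linarith
  have hLj := hLpos (j+1)
  have hDb : a (j+2)^2 * D ≤ Lk (j+1) / 2 * Aq := by
    have h1 : 0 ≤ Lk (j+1) / 2 * ‖z (j+2) - xstar‖^2 := by positivity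
    linarith [hI]
  have halb2 : (K+1)/2 ≤ a (j+2) := by
    have h := halow (j+1)
    rw [e2] at h
    rw [hKdef]
    push_cast at h ⊢
    linarith
  have hasq2 : (K+1)^2/4 ≤ a (j+2)^2 := by nlinarith [halb2, hKpos]
  have hD : D ≤ 2 * Lk (j+1) * Aq / (K+1)^2 := by
    rcases le_or_gt D 0 with hD0 | hD0
    · have : 0 ≤ 2 * Lk (j+1) * Aq / (K+1)^2 := by positivity
      linarith
    · rw [le_div_iff₀ (by positivity : (0:ℝ) < (K+1)^2)]
      have h1 : (K+1)^2/4 * D ≤ a (j+2)^2 * D :=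
        mul_le_mul_of_nonneg_right hasq2 (le_of_lt hD0)
      linarith [hDb]
  have hμj : μ (j+1) = μ0 / K := by
    rw [hμ, hKdef]; push_cast; ring_nf
  have hgap : f 0 (x (j+2)) - f 0 xstar ≤ D + β * (μ0/K) := by
    have h1 := (hsandwich (x (j+2)) (hxmem (j+2)) (μ (j+1)) 0 le_rfl
      (le_of_lt (hμpos (j+1)))).2
    have h2 := (hsandwich xstar hxstarS (μ (j+1)) 0 le_rfl (le_of_lt (hμpos (j+1)))).1
    have h3 : β * (μ (j+1) - 0) = β * (μ0/K) := by rw [hμj]; ring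
    rw [hDdef]
    linarith [h1, h2, h3]
  have hLkj : Lk (j+1) = L' + L*K/μ0 := by
    rw [hLk, hμj, div_div_eq_mul_div]
  have hsplit : 2 * Lk (j+1) * Aq / (K+1)^2 =
      2*L'*Aq/(K+1)^2 + 2*(L*K/μ0)*Aq/(K+1)^2 := by
    rw [hLkj]; ring
  have t1 : 2*L'*Aq/(K+1)^2 ≤ 2*L'*(R2 + c*Real.log K)/K^2 := by
    apply div_le_div₀ (by positivity)
    · nlinarith [hAqle, hL']
    · positivity
    · nlinarith [hKpos]
  have t2 : 2*(L*K/μ0)*Aq/(K+1)^2 ≤ 2*L*Aq/(μ0*K) := by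
    rw [div_le_div_iff₀ (by positivity) (by positivity)]
    have he : 2*(L*K/μ0)*Aq*(μ0*K) = 2*L*Aq*K^2 := by
      field_simp
    rw [he]
    nlinarith [mul_nonneg (le_of_lt hL) hAqnn, hKpos]
  have t3 : β*(μ0/K) + 2*L*Aq/(μ0*K) = (2*L*R2 + 6*β*μ0^2*Real.log K)/(μ0*K) := by
    rw [hAq, hcdef]
    field_simp
    ring
  have t4 : 2*L'*(R2+c*Real.log K)/K^2 ≤ 2*(L'+L/μ0)*(R2+c*Real.log K)/K^2 := by
    apply (div_le_div_iff_of_pos_right (by positivity : (0:ℝ) < K^2)).2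
    have h1 : 0 ≤ L/μ0 := by positivity
    nlinarith [hRclg, h1]
  linarith [hgap, hD, hsplit, t1, t2, t3, t4]
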